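/- Let m ≥ 2 be an integer, α > 0 a real number, γ ∈ (0,1), and set t̂ = arctan(√(α/(m−1))). Then for every t ∈ (0, π/2) with t ≠ t̂, the inequality γ·g_{m,α}'(t) ≤ H_{m,α}(t, γ·g_{m,α}(t)) holds if and only if a·cos^2(2t) − 2b·cos(2t) + c ≥ 0, where a = (1−γ)·((m+α−1)^2 − γ^2·(m+α)^2), b = (m−α−1)·((m+α−1) − γ·(m+α)), and c = (1−γ)·γ^2·(m+α)^2 − 2γ·(m+α−1) + (1−γ)·(m−α−1)^2. -/

import Mathlib

/-- The right-hand side `H_{m,α}(t,w)` of the first-order ODE for `w = v̇`. -/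
noncomputable def Hrhs (m : ℕ) (α : ℝ) (t w : ℝ) : ℝ :=
  (1 + w ^ 2) *
    ((m : ℝ) + α +
      (((m : ℝ) - α - 1 - ((m : ℝ) + α - 1) * Real.cos (2 * t)) / Real.sin (2 * t)) * w)

/-- The explicit upper solution `g_{m,α}(t)`. -/
noncomputable def gUpper (m : ℕ) (α : ℝ) (t : ℝ) : ℝ :=
  ((m : ℝ) + α) * Real.sin (2 * t) /
    (((m : ℝ) + α - 1) * Real.cos (2 * t) - ((m : ℝ) - α - 1))

/-- The cone angle `t̂ = arctan √(α/(m−1))`. -/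
noncomputable def tHat (m : ℕ) (α : ℝ) : ℝ :=
  Real.arctan (Real.sqrt (α / ((m : ℝ) - 1)))

/-- For `γ ∈ (0,1)` and `t ∈ (0, π/2)`, `t ≠ t̂`, the lower-solution inequality
`γ g_{m,α}'(t) ≤ H_{m,α}(t, γ g_{m,α}(t))` holds if and only if
`a cos²(2t) − 2b cos(2t) + c ≥ 0` for the displayed coefficients `a`, `b`, `c`. -/
theorem lower_solution_iff (m : ℕ) (hm : 2 ≤ m) (α : ℝ) (hα : 0 < α)
    (γ : ℝ) (hγ : γ ∈ Set.Ioo (0 : ℝ) 1)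
    (t : ℝ) (ht : t ∈ Set.Ioo 0 (Real.pi / 2)) (ht' : t ≠ tHat m α) :
    γ * deriv (gUpper m α) t ≤ Hrhs m α t (γ * gUpper m α t) ↔
      (1 - γ) * (((m : ℝ) + α - 1) ^ 2 - γ ^ 2 * ((m : ℝ) + α) ^ 2) * Real.cos (2 * t) ^ 2
        - 2 * (((m : ℝ) - α - 1) * (((m : ℝ) + α - 1) - γ * ((m : ℝ) + α))) * Real.cos (2 * t)
        + ((1 - γ) * γ ^ 2 * ((m : ℝ) + α) ^ 2 - 2 * γ * ((m : ℝ) + α - 1)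
            + (1 - γ) * ((m : ℝ) - α - 1) ^ 2) ≥ 0 := by

  obtain ⟨hγ0, hγ1⟩ := hγ
  obtain ⟨ht0, htπ⟩ := ht
  set A : ℝ := (m : ℝ) + α with hA
  set B : ℝ := (m : ℝ) + α - 1 with hB
  set E : ℝ := (m : ℝ) - α - 1 with hE
  have hm2 : (2 : ℝ) ≤ (m : ℝ) := by exact_mod_cast hm
  have hApos : 0 < A := by simp only [hA]; linarith
  have hBpos : 0 < B := by simp only [hB]; linarith
  set c : ℝ := Real.cos (2 * t) with hc
  set s : ℝ := Real.sin (2 * t) with hs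
  have hspos : 0 < s := Real.sin_pos_of_pos_of_lt_pi (by linarith) (by linarith)
  have hsc : s ^ 2 + c ^ 2 = 1 := Real.sin_sq_add_cos_sq (2 * t)
  set D : ℝ := B * c - E with hD
  -- D ≠ 0
  have hm1 : (0 : ℝ) < (m : ℝ) - 1 := by linarith
  have hDne : D ≠ 0 := by
    intro h0
    apply ht'
    have hceq : c = E / B := by
      rw [eq_div_iff hBpos.ne']
      linear_combination h0 - hD
    -- cos (2 * tHat) = E / B
    have hx : Real.sqrt (α / ((m : ℝ) - 1)) ^ 2 = α / ((m : ℝ) - 1) :=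
      Real.sq_sqrt (le_of_lt (div_pos hα hm1))
    have hth : Real.cos (2 * tHat m α) = E / B := by
      rw [Real.cos_two_mul, tHat]
      have := Real.cos_sq_arctan (Real.sqrt (α / ((m : ℝ) - 1)))
      rw [Real.cos_sq_arctan, hx]
      rw [hE, hB]
      have h1 : (0 : ℝ) < 1 + α / ((m : ℝ) - 1) := by positivity
      have h2 : (m : ℝ) - 1 ≠ 0 := hm1.ne'
      have h3 : (m : ℝ) + α - 1 ≠ 0 := by linarith
      field_simp
      ring
    have hthat0 : 0 < tHat m α := by
      rw [tHat, ← Real.arctan_zero]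
      exact Real.arctan_strictMono (Real.sqrt_pos.2 (div_pos hα hm1))
    have hthatπ : tHat m α < Real.pi / 2 := Real.arctan_lt_pi_div_two _
    have : Real.cos (2 * t) = Real.cos (2 * tHat m α) := by rw [hth, ← hc, hceq]
    have h2t : 2 * t = 2 * tHat m α :=
      Real.injOn_cos ⟨by linarith, by linarith⟩ ⟨by linarith, by linarith⟩ this
    linarith
  have hsne : s ≠ 0 := ne_of_gt hspos
  have hD2 : 0 < D ^ 2 := by positivity
  -- derivative of gUpper
  have hder : HasDerivAt (gUpper m α) ((2 * A * (B - E * c)) / D ^ 2) t := by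
    have h2t : HasDerivAt (fun x : ℝ => 2 * x) 2 t := by
      simpa using (hasDerivAt_id t).const_mul 2
    have hsin : HasDerivAt (fun x : ℝ => Real.sin (2 * x)) (Real.cos (2 * t) * 2) t :=
      (Real.hasDerivAt_sin (2 * t)).comp t h2t
    have hcos : HasDerivAt (fun x : ℝ => Real.cos (2 * x)) (-Real.sin (2 * t) * 2) t :=
      (Real.hasDerivAt_cos (2 * t)).comp t h2t
    have hnum : HasDerivAt (fun x : ℝ => A * Real.sin (2 * x)) (A * (c * 2)) t := by
      simpa [hc] using hsin.const_mul A
    have hden : HasDerivAt (fun x : ℝ => B * Real.cos (2 * x) - E) (B * (-s * 2)) t := by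
      simpa [hs] using ((hcos.const_mul B).sub_const E)
    have := hnum.div hden hDne
    have heq : (A * (c * 2) * (B * c - E) - A * s * (B * (-s * 2))) / (B * c - E) ^ 2
        = (2 * A * (B - E * c)) / D ^ 2 := by
      rw [← hD]
      congr 1
      have hs2 : s ^ 2 = 1 - c ^ 2 := by linarith
      linear_combination (2 * A * B) * hs2
    rw [heq] at this
    have hfun : gUpper m α = fun x : ℝ => A * Real.sin (2 * x) / (B * Real.cos (2 * x) - E) := by
      ext x
      simp [gUpper, hA, hB, hE]
    rw [hfun]
    exact this
  have hderiv : deriv (gUpper m α) t = (2 * A * (B - E * c)) / D ^ 2 := hder.deriv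
  -- value of Hrhs
  have hg : gUpper m α t = A * s / D := by simp [gUpper, ← hA, ← hB, ← hE, ← hc, ← hs, hD]; rfl
  have hH : Hrhs m α t (γ * gUpper m α t)
      = A * (1 - γ) * ((D ^ 2 + γ ^ 2 * A ^ 2 * s ^ 2) / D ^ 2) := by
    rw [Hrhs, hg, ← hA, ← hB, ← hE, ← hc, ← hs]
    field_simp
    ring
  set Q : ℝ := (1 - γ) * (B ^ 2 - γ ^ 2 * A ^ 2) * c ^ 2
      - 2 * (E * (B - γ * A)) * c
      + ((1 - γ) * γ ^ 2 * A ^ 2 - 2 * γ * B + (1 - γ) * E ^ 2) with hQ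
  have hkey : Hrhs m α t (γ * gUpper m α t) - γ * deriv (gUpper m α) t = A * Q / D ^ 2 := by
    rw [hH, hderiv, hQ]
    have hs2 : s ^ 2 = 1 - c ^ 2 := by linarith
    field_simp
    rw [hs2]
    ring
  rw [← sub_nonneg, hkey, ge_iff_le, ← sub_nonneg, sub_zero]
  rw [le_div_iff₀ hD2, zero_mul]
  exact mul_nonneg_iff_of_pos_left hApos
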